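/- Let n = 2k be even with k ≥ 2, let A = circulant(a₀, a₁, …, a_{n−1}) be an n×n circulant matrix over a field F of characteristic 2, and let D₁ = diagonal(d₀, …, d_{n−1}) and D₂ = diagonal(e₀, …, e_{n−1}) be non-singular diagonal matrices over F such that A·D₁·A·D₂ = I. If a₁ ≠ a_{k+1}, then trace(D₁) = d₀ + d₁ + ⋯ + d_{n−1} = 0. -/

import Mathlib

open Matrix

/-- The `n × n` circulant matrix with first row `c₀, c₁, …, c_{n-1}`, i.e. the matrix whose
`(i,j)` entry is `c_{(j - i) mod n}`. -/
def circulantM {n : ℕ} {F : Type*} (c : Fin n → F) : Matrix (Fin n) (Fin n) F :=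
  Matrix.of fun i j => c (j - i)

/-- In `Fin (k+k)` with `k ≥ 2`, the solutions of `u + u = 2` are exactly `1` and `k+1`. -/
lemma fin_add_self_eq_two {k : ℕ} (hk : 2 ≤ k) [NeZero (k + k)] (u : Fin (k + k)) :
    u + u = (2 : Fin (k + k)) ↔ u.val = 1 ∨ u.val = k + 1 := by
  have hval2 : ((2 : Fin (k + k)) : ℕ) = 2 := by
    rw [Fin.coe_ofNat_eq_mod, Nat.mod_eq_of_lt (by omega)]
  constructor
  · intro hu
    have := congrArg Fin.val hu
    rw [Fin.val_add, hval2] at this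
    have hlt : u.val < k + k := u.isLt
    have hmod := Nat.div_add_mod (u.val + u.val) (k + k)
    have hq : (u.val + u.val) / (k + k) < 2 :=
      Nat.div_lt_of_lt_mul (by omega)
    have hq01 : (u.val + u.val) / (k + k) = 0 ∨ (u.val + u.val) / (k + k) = 1 :=
      Nat.le_one_iff_eq_zero_or_eq_one.mp (Nat.lt_succ_iff.mp hq)
    rcases hq01 with hq' | hq' <;> rw [hq'] at hmod <;> omega
  · intro hu
    apply Fin.ext
    rw [Fin.val_add, hval2]
    rcases hu with hu | hu
    · rw [hu, Nat.mod_eq_of_lt (by omega)]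
    · rw [hu]
      have h2 : k + 1 + (k + 1) = (k + k) + 2 := by omega
      rw [h2, Nat.add_mod_left, Nat.mod_eq_of_lt (by omega)]

/-- Let `n = 2k` be even with `k ≥ 2`, let `A = circulant(a₀, …, a_{n-1})`
be an `n × n` circulant matrix over a field `F` of characteristic 2, and let
`D₁ = diagonal d`, `D₂ = diagonal e` be non-singular diagonal matrices over `F` such that
`A * D₁ * A * D₂ = 1`. If `a₁ ≠ a_{k+1}`, then `trace D₁ = d₀ + d₁ + ⋯ + d_{n-1} = 0`. -/
theorem trace_eq_zero_of_semiInvolutory_even_order {F : Type*} [Field F] [CharP F 2]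
    {k : ℕ} (hk : 2 ≤ k)
    (a d e : Fin (k + k) → F) (hd : ∀ i, d i ≠ 0) (he : ∀ i, e i ≠ 0)
    (h : circulantM a * Matrix.diagonal d * circulantM a * Matrix.diagonal e = 1)
    (ha : a ⟨1, by omega⟩ ≠ a ⟨k + 1, by omega⟩) :
    (Matrix.diagonal d).trace = 0 := by
  classical
  haveI : NeZero (k + k) := ⟨by omega⟩
  set i1 : Fin (k + k) := ⟨1, by omega⟩ with hi1
  set i2 : Fin (k + k) := ⟨k + 1, by omega⟩ with hi2
  -- characteristic two facts
  have char2 : ∀ x : F, x + x = 0 := CharTwo.add_self_eq_zero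
  -- step 1: off-diagonal entries of A * D₁ * A vanish
  have hne : ∀ i : Fin (k + k), i ≠ i + 2 := by
    intro i hi
    have h2 : (2 : Fin (k + k)) ≠ 0 := by
      intro h2
      have := congrArg Fin.val h2
      rw [Fin.coe_ofNat_eq_mod, Nat.mod_eq_of_lt (by omega), Fin.val_zero] at this
      omega
    apply h2
    have : i + 2 = i + 0 := by rw [← hi, add_zero]
    exact add_left_cancel this
  have hoff : ∀ i : Fin (k + k),
      (∑ t : Fin (k + k), a (t - i) * d t * a (i + 2 - t)) = 0 := by
    intro i
    have hh := congrFun (congrFun h i) (i + 2)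
    rw [Matrix.mul_diagonal, Matrix.one_apply_ne (hne i)] at hh
    have h0 : (circulantM a * Matrix.diagonal d * circulantM a) i (i + 2) = 0 :=
      (mul_eq_zero.mp hh).resolve_right (he _)
    rw [Matrix.mul_apply] at h0
    simp only [Matrix.mul_diagonal, circulantM, Matrix.of_apply] at h0
    exact h0
  -- step 2: sum them up and reindex
  have hsum : (∑ t : Fin (k + k), ∑ i : Fin (k + k),
      a (t - i) * d t * a (i + 2 - t)) = 0 := by
    rw [Finset.sum_comm]
    exact Finset.sum_eq_zero fun i _ => hoff i
  have hre : ∀ t : Fin (k + k),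
      (∑ i : Fin (k + k), a (t - i) * d t * a (i + 2 - t))
        = (∑ u : Fin (k + k), a u * a (2 - u)) * d t := by
    intro t
    rw [Finset.sum_mul]
    refine (Fintype.sum_equiv (Equiv.subLeft t) _ _ fun u => ?_).symm
    have e1 : t - (t - u) = u := by abel
    have e2 : t - u + 2 - t = 2 - u := by abel
    show a u * a (2 - u) * d t = a (t - (t - u)) * d t * a (t - u + 2 - t)
    rw [e1, e2]
    ring
  simp_rw [hre] at hsum
  rw [← Finset.mul_sum] at hsum
  -- step 3: compute the constant c = ∑ u, a u * a (2 - u)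
  set c : F := ∑ u : Fin (k + k), a u * a (2 - u) with hc
  have hsub1 : (2 : Fin (k + k)) - i1 = i1 := by
    rw [sub_eq_iff_eq_add]
    exact ((fin_add_self_eq_two hk i1).mpr (Or.inl rfl)).symm
  have hsub2 : (2 : Fin (k + k)) - i2 = i2 := by
    rw [sub_eq_iff_eq_add]
    exact ((fin_add_self_eq_two hk i2).mpr (Or.inr rfl)).symm
  have h12 : i1 ≠ i2 := by
    intro hh
    have := congrArg Fin.val hh
    simp [hi1, hi2] at this
    omega
  have hcompl : ∑ u ∈ ({i1, i2} : Finset (Fin (k + k)))ᶜ, a u * a (2 - u) = 0 := by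
    apply Finset.sum_involution (g := fun u _ => (2 : Fin (k + k)) - u)
    · intro u _
      have e3 : (2 : Fin (k + k)) - (2 - u) = u := by abel
      rw [e3]
      have : a u * a (2 - u) + a (2 - u) * a u = a u * a (2 - u) + a u * a (2 - u) := by ring
      rw [this]; exact char2 _
    · intro u hu _
      intro heq
      have : u + u = (2 : Fin (k + k)) := (sub_eq_iff_eq_add.mp heq).symm
      have hv := (fin_add_self_eq_two hk u).mp this
      simp only [Finset.mem_compl, Finset.mem_insert, Finset.mem_singleton] at hu
      rcases hv with hv | hv
      · exact hu (Or.inl (Fin.ext (by simp [hi1, hv])))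
      · exact hu (Or.inr (Fin.ext (by simp [hi2, hv])))
    · intro u hu
      simp only [Finset.mem_compl, Finset.mem_insert, Finset.mem_singleton] at hu ⊢
      push_neg at hu ⊢
      constructor
      · intro hh
        apply hu.1
        have : u = 2 - i1 := by rw [← hh]; abel
        rw [this, hsub1]
      · intro hh
        apply hu.2
        have : u = 2 - i2 := by rw [← hh]; abel
        rw [this, hsub2]
    · intro u _
      abel
  have hcval : c = (a i1 + a i2) ^ 2 := by
    rw [hc, ← Finset.sum_add_sum_compl ({i1, i2} : Finset (Fin (k + k))), hcompl, add_zero,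
      Finset.sum_pair h12, hsub1, hsub2]
    have : (a i1 + a i2) ^ 2 = a i1 * a i1 + a i2 * a i2 + (a i1 * a i2 + a i1 * a i2) := by
      ring
    rw [this, char2, add_zero]
  have hcne : c ≠ 0 := by
    rw [hcval]
    apply pow_ne_zero
    intro hz
    apply ha
    have : a i1 = a i1 + (a i2 + a i2) := by rw [char2, add_zero]
    calc a i1 = a i1 + (a i2 + a i2) := this
      _ = (a i1 + a i2) + a i2 := by ring
      _ = a i2 := by rw [hz, zero_add]
  -- conclude
  have hT : (∑ t : Fin (k + k), d t) = 0 := by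
    rcases mul_eq_zero.mp hsum with h' | h'
    · exact absurd h' hcne
    · exact h'
  rw [Matrix.trace]
  simpa [Matrix.diag] using hT
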